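/- Jump–power inequality: for all real x, y > 0 and γ ∈ (1,2], (x − y)² ≤ (x^{γ/2} − y^{γ/2})²·(x^{1−γ/2} + y^{1−γ/2})². -/
import Mathlib

lemma key_aux (a : ℝ) (ha : 1/2 ≤ a) (x y : ℝ) (hx : 0 < x) (hy : 0 < y)
    (hxy : y ≤ x) :
    x - y ≤ (x ^ a - y ^ a) * (x ^ (1 - a) + y ^ (1 - a)) := by
  have hb : (0:ℝ) ≤ 2*a - 1 := by linarith
  have h1 : y ^ (2*a-1) ≤ x ^ (2*a-1) :=
    Real.rpow_le_rpow hy.le hxy hb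
  have hx1 : x ^ a * x ^ (1 - a) = x := by
    rw [← Real.rpow_add hx]; norm_num
  have hy1 : y ^ a * y ^ (1 - a) = y := by
    rw [← Real.rpow_add hy]; norm_num
  have hx2 : x ^ a = x ^ (1-a) * x ^ (2*a-1) := by
    rw [← Real.rpow_add hx]; ring_nf
  have hy2 : y ^ a = y ^ (1-a) * y ^ (2*a-1) := by
    rw [← Real.rpow_add hy]; ring_nf
  have hcross : y ^ a * x ^ (1 - a) ≤ x ^ a * y ^ (1 - a) := by
    rw [hx2, hy2]
    have hxp : (0:ℝ) ≤ x ^ (1-a) := (Real.rpow_pos_of_pos hx _).le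
    have hyp : (0:ℝ) ≤ y ^ (1-a) := (Real.rpow_pos_of_pos hy _).le
    calc y ^ (1-a) * y ^ (2*a-1) * x ^ (1-a)
        ≤ y ^ (1-a) * x ^ (2*a-1) * x ^ (1-a) := by
          apply mul_le_mul_of_nonneg_right _ hxp
          exact mul_le_mul_of_nonneg_left h1 hyp
      _ = x ^ (1-a) * x ^ (2*a-1) * y ^ (1-a) := by ring
  nlinarith [hx1, hy1, hcross]

/-- jump–power inequality. For `x, y > 0` and `γ ∈ (1,2]`,
`(x − y)² ≤ (x^{γ/2} − y^{γ/2})² (x^{1−γ/2} + y^{1−γ/2})²`. -/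
theorem stmt13 (γ : ℝ) (h1 : 1 < γ) (h2 : γ ≤ 2) :
    ∀ x y : ℝ, 0 < x → 0 < y →
      (x - y) ^ 2 ≤ (x ^ (γ / 2) - y ^ (γ / 2)) ^ 2
        * (x ^ (1 - γ / 2) + y ^ (1 - γ / 2)) ^ 2 := by
  have ha : (1:ℝ)/2 ≤ γ/2 := by linarith
  have main : ∀ x y : ℝ, 0 < x → 0 < y → y ≤ x →
      (x - y) ^ 2 ≤ (x ^ (γ / 2) - y ^ (γ / 2)) ^ 2
        * (x ^ (1 - γ / 2) + y ^ (1 - γ / 2)) ^ 2 := by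
    intro x y hx hy hxy
    have hk := key_aux (γ/2) ha x y hx hy hxy
    have h0 : 0 ≤ x - y := by linarith
    calc (x - y)^2 ≤ ((x ^ (γ/2) - y ^ (γ/2)) * (x ^ (1-γ/2) + y ^ (1-γ/2)))^2 := by
          apply sq_le_sq' _ hk
          linarith
      _ = (x ^ (γ/2) - y ^ (γ/2))^2 * (x ^ (1-γ/2) + y ^ (1-γ/2))^2 := mul_pow ..
  intro x y hx hy
  rcases le_total y x with h | h
  · exact main x y hx hy h
  · have := main y x hy hx h
    calc (x-y)^2 = (y-x)^2 := by ring
      _ ≤ (y ^ (γ/2) - x ^ (γ/2))^2 * (y ^ (1-γ/2) + x ^ (1-γ/2))^2 := this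
      _ = (x ^ (γ/2) - y ^ (γ/2))^2 * (x ^ (1-γ/2) + y ^ (1-γ/2))^2 := by ring
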